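/- In the ISD setup, I(X2; Y1 | X1) ≤ H(g1(X2, Z1)) − H(Z1). -/
import Mathlib


open MeasureTheory ProbabilityTheory Real

/-- The probability that a random variable `X` takes the value `x`. -/
noncomputable def prob {Ω : Type*} [MeasurableSpace Ω] (μ : Measure Ω)
    {α : Type*} (X : Ω → α) (x : α) : ℝ :=
  (μ {ω | X ω = x}).toReal

/-- Shannon entropy `H(X) = ∑ₓ −P(X=x)·log P(X=x)` (natural logarithm). -/
noncomputable def entropy {Ω : Type*} [MeasurableSpace Ω] (μ : Measure Ω)
    {α : Type*} (X : Ω → α) : ℝ :=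
  ∑' x : α, negMulLog (prob μ X x)

/-- Conditional entropy `H(X | Y) = ∑_y P(Y=y) · H(X | Y = y)`. -/
noncomputable def condEntropy {Ω : Type*} [MeasurableSpace Ω] (μ : Measure Ω)
    {α β : Type*} (X : Ω → α) (Y : Ω → β) : ℝ :=
  ∑' y : β, prob μ Y y *
    ∑' x : α, negMulLog ((μ {ω | X ω = x ∧ Y ω = y}).toReal / prob μ Y y)


/-- Conditional mutual information `I(X;Y|Z) = H(X|Z) − H(X|(Y,Z))`. -/
noncomputable def condMutualInfo {Ω : Type*} [MeasurableSpace Ω] (μ : Measure Ω)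
    {α β γ : Type*} (X : Ω → α) (Y : Ω → β) (Z : Ω → γ) : ℝ :=
  condEntropy μ X Z - condEntropy μ X (fun ω => (Y ω, Z ω))

namespace ISDAux
open Finset
open scoped Classical

variable {S : Type*} [Fintype S]

noncomputable def qf (p : S → ℝ) {α : Type*} (F : S → α) (x : α) : ℝ :=
  ∑ s, if F s = x then p s else 0

noncomputable def He (p : S → ℝ) {α : Type*} [Fintype α] (F : S → α) : ℝ :=
  ∑ x, negMulLog (qf p F x)

noncomputable def Hcd (p : S → ℝ) {α γ : Type*} [Fintype α] [Fintype γ]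
    (F : S → α) (K : S → γ) : ℝ :=
  ∑ z, qf p K z * ∑ x, negMulLog (qf p (fun s => (F s, K s)) (x, z) / qf p K z)

variable {p : S → ℝ} {α β γ : Type*}

lemma qf_nonneg (hp : ∀ s, 0 ≤ p s) (F : S → α) (x : α) : 0 ≤ qf p F x := by
  apply Finset.sum_nonneg; intro s _
  split
  exacts [hp s, le_rfl]

lemma qf_pair_le (hp : ∀ s, 0 ≤ p s) (F : S → α) (K : S → γ) (x : α) (z : γ) :
    qf p (fun s => (F s, K s)) (x, z) ≤ qf p K z := by
  apply Finset.sum_le_sum; intro s _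
  by_cases h : (F s, K s) = (x, z)
  · have hK : K s = z := by rw [Prod.ext_iff] at h; exact h.2
    rw [if_pos h, if_pos hK]
  · rw [if_neg h]
    split
    exacts [hp s, le_rfl]

lemma qf_fst_marginal [Fintype α] (F : S → α) (K : S → γ) (z : γ) :
    ∑ x, qf p (fun s => (F s, K s)) (x, z) = qf p K z := by
  unfold qf
  rw [Finset.sum_comm]
  refine Finset.sum_congr rfl fun s _ => ?_
  simp [Prod.ext_iff, ite_and, Finset.sum_ite_eq]

lemma qf_snd_marginal [Fintype γ] (F : S → α) (K : S → γ) (x : α) :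
    ∑ z, qf p (fun s => (F s, K s)) (x, z) = qf p F x := by
  unfold qf
  rw [Finset.sum_comm]
  refine Finset.sum_congr rfl fun s _ => ?_
  simp [Prod.ext_iff, ite_and, Finset.sum_ite_eq]

lemma qf_sum (F : S → α) [Fintype α] : ∑ x, qf p F x = ∑ s, p s := by
  unfold qf
  rw [Finset.sum_comm]
  refine Finset.sum_congr rfl fun s _ => ?_
  simp [Finset.sum_ite_eq]


lemma mul_negMulLog_div (a b : ℝ) (hb : b ≠ 0) :
    b * negMulLog (a / b) = negMulLog a + a * log b := by
  rcases eq_or_ne a 0 with rfl | ha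
  · simp [negMulLog]
  · unfold negMulLog
    rw [Real.log_div ha hb]
    field_simp
    ring

lemma qf_pair_eq_zero (hp : ∀ s, 0 ≤ p s) {F : S → α} {K : S → γ} {x : α} {z : γ}
    (hz : qf p K z = 0) : qf p (fun s => (F s, K s)) (x, z) = 0 :=
  le_antisymm (hz ▸ qf_pair_le hp F K x z) (qf_nonneg hp _ _)

lemma Hcd_eq [Fintype α] [Fintype γ] (hp : ∀ s, 0 ≤ p s) (F : S → α) (K : S → γ) :
    Hcd p F K = He p (fun s => (F s, K s)) - He p K := by
  unfold Hcd He
  rw [Fintype.sum_prod_type_right]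
  rw [← Finset.sum_sub_distrib]
  refine Finset.sum_congr rfl fun z _ => ?_
  rcases eq_or_ne (qf p K z) 0 with hz | hz
  · have h0 : ∀ x : α, qf p (fun s => (F s, K s)) (x, z) = 0 :=
      fun x => qf_pair_eq_zero hp hz
    simp [hz, h0]
  · rw [Finset.mul_sum]
    have : ∀ x ∈ (univ : Finset α),
        qf p K z * negMulLog (qf p (fun s => (F s, K s)) (x, z) / qf p K z)
        = negMulLog (qf p (fun s => (F s, K s)) (x, z))
          + qf p (fun s => (F s, K s)) (x, z) * log (qf p K z) := by
      intro x _
      exact mul_negMulLog_div _ _ hz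
    rw [Finset.sum_congr rfl this, Finset.sum_add_distrib, ← Finset.sum_mul,
      qf_fst_marginal]
    unfold negMulLog
    ring

lemma He_comp_inj [Fintype α] [Fintype β]
    {σ : α → β} (hσ : Function.Injective σ) (F : S → α) :
    He p (fun s => σ (F s)) = He p F := by
  unfold He
  have h1 : ∑ y : β, negMulLog (qf p (fun s => σ (F s)) y)
      = ∑ y ∈ Finset.image σ univ, negMulLog (qf p (fun s => σ (F s)) y) := by
    symm
    apply Finset.sum_subset (Finset.subset_univ _)
    intro y _ hy
    have h0 : qf p (fun s => σ (F s)) y = 0 := by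
      unfold qf
      refine Finset.sum_eq_zero fun s _ => ?_
      rw [if_neg]
      intro h
      exact hy (Finset.mem_image.2 ⟨F s, Finset.mem_univ _, h⟩)
    simp [h0]
  rw [h1, Finset.sum_image (fun x _ y _ h => hσ h)]
  refine Finset.sum_congr rfl fun x _ => ?_
  congr 1
  unfold qf
  refine Finset.sum_congr rfl fun s _ => ?_
  simp [hσ.eq_iff]


lemma Hcd_le_He [Fintype α] [Fintype γ] (hp : ∀ s, 0 ≤ p s) (hp1 : ∑ s, p s = 1)
    (F : S → α) (K : S → γ) : Hcd p F K ≤ He p F := by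
  unfold Hcd He
  have hKsum : ∑ z, qf p K z = 1 := by rw [qf_sum, hp1]
  calc ∑ z, qf p K z * ∑ x, negMulLog (qf p (fun s => (F s, K s)) (x, z) / qf p K z)
      = ∑ x, ∑ z, qf p K z * negMulLog (qf p (fun s => (F s, K s)) (x, z) / qf p K z) := by
        rw [Finset.sum_comm]
        exact Finset.sum_congr rfl fun z _ => Finset.mul_sum _ _ _
    _ ≤ ∑ x, negMulLog (qf p F x) := by
        apply Finset.sum_le_sum
        intro x _
        have hjen := Real.concaveOn_negMulLog.le_map_sum
          (t := (univ : Finset γ)) (w := fun z => qf p K z)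
          (p := fun z => qf p (fun s => (F s, K s)) (x, z) / qf p K z)
          (fun z _ => qf_nonneg hp K z) hKsum
          (fun z _ => Set.mem_Ici.2 (div_nonneg (qf_nonneg hp _ _) (qf_nonneg hp K z)))
        simp only [smul_eq_mul] at hjen
        have hsum : ∑ z, qf p K z * (qf p (fun s => (F s, K s)) (x, z) / qf p K z)
            = qf p F x := by
          rw [← qf_snd_marginal F K x]
          refine Finset.sum_congr rfl fun z _ => ?_
          rcases eq_or_ne (qf p K z) 0 with hz | hz
          · rw [hz, qf_pair_eq_zero hp hz]; simp
          · rw [mul_div_cancel₀ _ hz]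
        rw [hsum] at hjen
        exact hjen

lemma Hcd_comp [Fintype α] [Fintype β] [Fintype γ] (hp : ∀ s, 0 ≤ p s)
    {φ : γ → α → β} (hφ : ∀ k, Function.Injective (φ k)) (F : S → α) (K : S → γ) :
    Hcd p (fun s => φ (K s) (F s)) K = Hcd p F K := by
  rw [Hcd_eq hp, Hcd_eq hp]
  have hσ : Function.Injective (fun q : α × γ => (φ q.2 q.1, q.2)) := by
    rintro ⟨a, k⟩ ⟨a', k'⟩ h
    rw [Prod.ext_iff] at h
    obtain ⟨h1, h2⟩ := h
    simp only at h1 h2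
    subst h2
    exact Prod.ext (hφ k h1) rfl
  have := He_comp_inj (p := p) hσ (fun s => (F s, K s))
  simp only at this
  rw [this]

lemma Hcd_indep [Fintype α] [Fintype γ] (F : S → α) (K : S → γ) (hp1 : ∑ s, p s = 1)
    (hfac : ∀ x z, qf p (fun s => (F s, K s)) (x, z) = qf p F x * qf p K z) :
    Hcd p F K = He p F := by
  unfold Hcd
  have : ∀ z ∈ (univ : Finset γ),
      qf p K z * ∑ x, negMulLog (qf p (fun s => (F s, K s)) (x, z) / qf p K z)
      = qf p K z * He p F := by
    intro z _
    rcases eq_or_ne (qf p K z) 0 with hz | hz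
    · rw [hz]; ring
    · congr 1
      unfold He
      refine Finset.sum_congr rfl fun x _ => ?_
      rw [hfac, mul_div_assoc, div_self hz, mul_one]
  rw [Finset.sum_congr rfl this, ← Finset.sum_mul, qf_sum, hp1, one_mul]


lemma main_pmf {S X1T X2T Z1T T1T Y1T : Type*} [Fintype S] [Fintype X1T] [Fintype X2T]
    [Fintype Z1T] [Fintype T1T] [Fintype Y1T]
    {p : S → ℝ} (hp : ∀ s, 0 ≤ p s) (hp1 : ∑ s, p s = 1)
    (g1 : X2T → Z1T → T1T) (hg1 : ∀ x2, Function.Injective (g1 x2))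
    (f1 : X1T → T1T → Y1T) (hf1 : ∀ x1, Function.Injective (f1 x1))
    (A : S → X1T) (B : S → X2T) (Z : S → Z1T)
    (hfac : ∀ z w, qf p (fun s => (Z s, (B s, A s))) (z, w)
      = qf p Z z * qf p (fun s => (B s, A s)) w) :
    Hcd p B A - Hcd p B (fun s => (f1 (A s) (g1 (B s) (Z s)), A s))
      ≤ He p (fun s => g1 (B s) (Z s)) - He p Z := by
  have hsym : Hcd p B A - Hcd p B (fun s => (f1 (A s) (g1 (B s) (Z s)), A s))
      = Hcd p (fun s => f1 (A s) (g1 (B s) (Z s))) A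
        - Hcd p (fun s => f1 (A s) (g1 (B s) (Z s))) (fun s => (B s, A s)) := by
    rw [Hcd_eq hp, Hcd_eq hp, Hcd_eq hp, Hcd_eq hp]
    have hσ : Function.Injective
        (fun q : X2T × (Y1T × X1T) => (q.2.1, (q.1, q.2.2))) := by
      rintro ⟨b, y, a⟩ ⟨b', y', a'⟩ h
      simp only [Prod.ext_iff] at h ⊢
      tauto
    have h1 := He_comp_inj (p := p) hσ
      (fun s => (B s, (f1 (A s) (g1 (B s) (Z s)), A s)))
    simp only at h1
    rw [← h1]
    ring
  rw [hsym]
  have h2 : Hcd p (fun s => f1 (A s) (g1 (B s) (Z s))) A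
      = Hcd p (fun s => g1 (B s) (Z s)) A := by
    have := Hcd_comp (p := p) hp hf1 (fun s => g1 (B s) (Z s)) A
    simpa using this
  have h3 : Hcd p (fun s => f1 (A s) (g1 (B s) (Z s))) (fun s => (B s, A s))
      = Hcd p Z (fun s => (B s, A s)) := by
    have hφ : ∀ w : X2T × X1T, Function.Injective (fun z => f1 w.2 (g1 w.1 z)) :=
      fun w => (hf1 w.2).comp (hg1 w.1)
    have := Hcd_comp (p := p) hp hφ Z (fun s => (B s, A s))
    simpa using this
  have h4 : Hcd p Z (fun s => (B s, A s)) = He p Z :=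
    Hcd_indep _ _ hp1 hfac
  have h5 := Hcd_le_He hp hp1 (fun s => g1 (B s) (Z s)) A
  linarith

section Bridge
variable {Ω : Type*} [MeasurableSpace Ω] (μ : Measure Ω) [IsProbabilityMeasure μ]
variable {S : Type*} [Fintype S] {W : Ω → S}

lemma prob_comp (hW : ∀ s : S, MeasurableSet (W ⁻¹' {s})) {α : Type*} (F : S → α) (x : α) :
    prob μ (fun ω => F (W ω)) x = qf (fun s => prob μ W s) F x := by
  unfold prob qf
  have hset : {ω | F (W ω) = x} = W ⁻¹' ↑(univ.filter (fun s => F s = x)) := by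
    ext ω; simp
  rw [hset, ← sum_measure_preimage_singleton _ (fun y _ => hW y),
    ENNReal.toReal_sum (fun s _ => measure_ne_top μ _), Finset.sum_filter]
  rfl

lemma prob_sum_one (hW : ∀ s : S, MeasurableSet (W ⁻¹' {s})) :
    ∑ s, prob μ W s = 1 := by
  have h := sum_measure_preimage_singleton (μ := μ) (univ : Finset S) (fun y _ => hW y)
  rw [Finset.coe_univ, Set.preimage_univ, measure_univ] at h
  unfold prob
  rw [← ENNReal.toReal_sum (fun s _ => measure_ne_top μ _)]
  rw [show (∑ s, μ {ω | W ω = s}) = ∑ s, μ (W ⁻¹' {s}) from rfl, h]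
  simp

lemma entropy_comp (hW : ∀ s : S, MeasurableSet (W ⁻¹' {s})) {α : Type*} [Fintype α]
    (F : S → α) :
    entropy μ (fun ω => F (W ω)) = He (fun s => prob μ W s) F := by
  unfold entropy He
  rw [tsum_fintype]
  exact Finset.sum_congr rfl fun x _ => by rw [prob_comp μ hW F x]

lemma condEntropy_comp (hW : ∀ s : S, MeasurableSet (W ⁻¹' {s}))
    {α γ : Type*} [Fintype α] [Fintype γ] (F : S → α) (G : S → γ) :
    condEntropy μ (fun ω => F (W ω)) (fun ω => G (W ω))
      = Hcd (fun s => prob μ W s) F G := by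
  unfold condEntropy Hcd
  rw [tsum_fintype]
  refine Finset.sum_congr rfl fun z _ => ?_
  rw [prob_comp μ hW G z]
  congr 1
  rw [tsum_fintype]
  refine Finset.sum_congr rfl fun x _ => ?_
  have hnum : (μ {ω | F (W ω) = x ∧ G (W ω) = z}).toReal
      = qf (fun s => prob μ W s) (fun s => (F s, G s)) (x, z) := by
    have hset : {ω | F (W ω) = x ∧ G (W ω) = z}
        = {ω | (fun ω => (F (W ω), G (W ω))) ω = (x, z)} := by
      ext ω; simp [Prod.ext_iff]
    rw [show (μ {ω | F (W ω) = x ∧ G (W ω) = z}).toReal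
        = prob μ (fun ω => (F (W ω), G (W ω))) (x, z) from by unfold prob; rw [hset]]
    exact prob_comp μ hW (fun s => (F s, G s)) (x, z)
  rw [hnum]

end Bridge
end ISDAux

/-- In the ISD setup, `I(X2; Y1 | X1) ≤ H(g1(X2, Z1)) − H(Z1)`. -/
theorem isd_condMutualInfo_le
    {Ω 𝒳1 𝒳2 𝒵1 𝒯1 𝒴1 : Type*} [MeasurableSpace Ω]
    [Fintype 𝒳1] [Fintype 𝒳2] [Fintype 𝒵1] [Fintype 𝒯1] [Fintype 𝒴1]
    [MeasurableSpace 𝒳1] [MeasurableSingletonClass 𝒳1]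
    [MeasurableSpace 𝒳2] [MeasurableSingletonClass 𝒳2]
    [MeasurableSpace 𝒵1] [MeasurableSingletonClass 𝒵1]
    (μ : Measure Ω) [IsProbabilityMeasure μ]
    (g1 : 𝒳2 → 𝒵1 → 𝒯1) (hg1 : ∀ x2, Function.Injective (g1 x2))
    (f1 : 𝒳1 → 𝒯1 → 𝒴1) (hf1 : ∀ x1, Function.Injective (f1 x1))
    (X1 : Ω → 𝒳1) (X2 : Ω → 𝒳2) (Z1 : Ω → 𝒵1)
    (hX1 : Measurable X1) (hX2 : Measurable X2) (hZ1 : Measurable Z1)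
    (hindep : IndepFun Z1 (fun ω => (X1 ω, X2 ω)) μ)
    (Y1 : Ω → 𝒴1) (hY1 : ∀ ω, Y1 ω = f1 (X1 ω) (g1 (X2 ω) (Z1 ω))) :
    condMutualInfo μ X2 Y1 X1
      ≤ entropy μ (fun ω => g1 (X2 ω) (Z1 ω)) - entropy μ Z1 := by
  classical
  have hY1' : Y1 = fun ω => f1 (X1 ω) (g1 (X2 ω) (Z1 ω)) := funext hY1
  subst hY1'
  set W : Ω → 𝒳1 × 𝒳2 × 𝒵1 := fun ω => (X1 ω, X2 ω, Z1 ω) with hW_def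
  have hWm : ∀ s, MeasurableSet (W ⁻¹' {s}) := fun s =>
    (hX1.prodMk (hX2.prodMk hZ1)) (measurableSet_singleton s)
  set p : 𝒳1 × 𝒳2 × 𝒵1 → ℝ := fun s => prob μ W s with hp_def
  have hp : ∀ s, 0 ≤ p s := fun s => ENNReal.toReal_nonneg
  have hp1 : ∑ s, p s = 1 := ISDAux.prob_sum_one μ hWm
  have hfac : ∀ (z : 𝒵1) (w : 𝒳2 × 𝒳1),
      ISDAux.qf p (fun s : 𝒳1 × 𝒳2 × 𝒵1 => (s.2.2, (s.2.1, s.1))) (z, w)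
        = ISDAux.qf p (fun s : 𝒳1 × 𝒳2 × 𝒵1 => s.2.2) z
          * ISDAux.qf p (fun s : 𝒳1 × 𝒳2 × 𝒵1 => (s.2.1, s.1)) w := by
    intro z w
    rw [← ISDAux.prob_comp μ hWm, ← ISDAux.prob_comp μ hWm, ← ISDAux.prob_comp μ hWm]
    unfold prob
    have hset : {ω | (W ω).2.2 = z ∧ ((W ω).2.1, (W ω).1) = w}
        = Z1 ⁻¹' {z} ∩ (fun ω => (X1 ω, X2 ω)) ⁻¹' {(w.2, w.1)} := by
      ext ω
      simp [hW_def, Prod.ext_iff]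
      tauto
    have hset1 : {ω | ((W ω).2.2, ((W ω).2.1, (W ω).1)) = (z, w)}
        = {ω | (W ω).2.2 = z ∧ ((W ω).2.1, (W ω).1) = w} := by
      ext ω; simp [Prod.ext_iff]
    rw [show {ω | (fun ω => ((W ω).2.2, ((W ω).2.1, (W ω).1))) ω = (z, w)}
        = Z1 ⁻¹' {z} ∩ (fun ω => (X1 ω, X2 ω)) ⁻¹' {(w.2, w.1)} from hset1.trans hset]
    rw [hindep.measure_inter_preimage_eq_mul _ _ (measurableSet_singleton z)
      (measurableSet_singleton _), ENNReal.toReal_mul]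
    congr 1
    have hseteq : (fun ω => (X1 ω, X2 ω)) ⁻¹' {(w.2, w.1)}
        = {ω | ((W ω).2.1, (W ω).1) = w} := by
      ext ω
      simp [hW_def, Prod.ext_iff]
      tauto
    rw [hseteq]
  have e1 : condEntropy μ X2 X1
      = ISDAux.Hcd p (fun s : 𝒳1 × 𝒳2 × 𝒵1 => s.2.1) (fun s => s.1) :=
    ISDAux.condEntropy_comp μ hWm (fun s => s.2.1) (fun s => s.1)
  have e2 : condEntropy μ X2 (fun ω => (f1 (X1 ω) (g1 (X2 ω) (Z1 ω)), X1 ω))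
      = ISDAux.Hcd p (fun s : 𝒳1 × 𝒳2 × 𝒵1 => s.2.1)
          (fun s => (f1 s.1 (g1 s.2.1 s.2.2), s.1)) :=
    ISDAux.condEntropy_comp μ hWm (fun s => s.2.1) (fun s => (f1 s.1 (g1 s.2.1 s.2.2), s.1))
  have e3 : entropy μ (fun ω => g1 (X2 ω) (Z1 ω))
      = ISDAux.He p (fun s : 𝒳1 × 𝒳2 × 𝒵1 => g1 s.2.1 s.2.2) :=
    ISDAux.entropy_comp μ hWm (fun s => g1 s.2.1 s.2.2)
  have e4 : entropy μ Z1 = ISDAux.He p (fun s : 𝒳1 × 𝒳2 × 𝒵1 => s.2.2) :=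
    ISDAux.entropy_comp μ hWm (fun s => s.2.2)
  rw [condMutualInfo, e1, e2, e3, e4]
  exact ISDAux.main_pmf hp hp1 g1 hg1 f1 hf1
    (fun s => s.1) (fun s => s.2.1) (fun s => s.2.2) hfac
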